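/- arXiv:2208.01002 — 4 statements merged into one kernel-verified Lean document; each statement's English description precedes it below -/
import Mathlib

section
/- If the erasure set E is not a superset of any nonempty stopping set of T(H), then the peeling decoder fully erases E: the process of repeatedly removing dangling bits terminates with the empty set, regardless of the order in which dangling bits are chosen. -/
/-- A subset `S` of bit nodes is a stopping set for the Tanner graph of `H`. -/
def IsStoppingSet {r n : ℕ} (H : Matrix (Fin r) (Fin n) (ZMod 2)) (S : Finset (Fin n)) : Prop :=
  ∀ i : Fin r, (S.filter (fun j => H i j = 1)).card ≠ 1

/-- `j` is a dangling bit of `S`. -/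
def IsDanglingBit {r n : ℕ} (H : Matrix (Fin r) (Fin n) (ZMod 2)) (S : Finset (Fin n))
    (j : Fin n) : Prop :=
  j ∈ S ∧ ∃ i : Fin r, H i j = 1 ∧ (S.filter (fun k => H i k = 1)).card = 1

/-- One step of the peeling decoder: remove a dangling bit from the erasure. -/
def PeelStep {r n : ℕ} (H : Matrix (Fin r) (Fin n) (ZMod 2)) (S S' : Finset (Fin n)) : Prop :=
  ∃ j : Fin n, IsDanglingBit H S j ∧ S' = S.erase j

/-- If the erasure `E` contains no nonempty stopping set, then every
maximal sequence of dangling-bit removals starting from `E` terminates with the empty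
set, regardless of the order of removals. -/
theorem peeling_succeeds_of_no_stopping_set
    {r n : ℕ} (H : Matrix (Fin r) (Fin n) (ZMod 2)) (E : Finset (Fin n))
    (hno : ∀ T ⊆ E, IsStoppingSet H T → T = ∅) :
    ∀ R : Finset (Fin n), Relation.ReflTransGen (PeelStep H) E R →
      (∀ R', ¬ PeelStep H R R') → R = ∅ := by
  intro R hRT
  have hsub : R ⊆ E := by
    induction hRT with
    | refl => exact Finset.Subset.refl _
    | tail _ hstep ih =>
      obtain ⟨j, _, rfl⟩ := hstep
      exact (Finset.erase_subset _ _).trans ih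
  intro hstuck
  refine hno R hsub ?_
  intro i hcard
  obtain ⟨j, hj⟩ := Finset.card_eq_one.mp hcard
  have hjmem : j ∈ R.filter (fun k => H i k = 1) := hj ▸ Finset.mem_singleton_self j
  have := Finset.mem_filter.mp hjmem
  exact hstuck (R.erase j) ⟨j, ⟨this.1, i, this.2, hcard⟩, rfl⟩
end

section
/- The peeling decoder is confluent: for a fixed erasure set E, any two maximal sequences of dangling-bit removals terminate with the same residual set of erased bits, namely the unique maximal stopping set contained in E. -/
/-- The peeling decoder is confluent: for a fixed erasure set `E` there
is a unique maximal stopping set `M ⊆ E`, and every maximal sequence of dangling-bit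
removals starting from `E` terminates with residual set exactly `M`. -/
theorem peeling_confluent
    {r n : ℕ} (H : Matrix (Fin r) (Fin n) (ZMod 2)) (E : Finset (Fin n)) :
    ∃ M : Finset (Fin n), M ⊆ E ∧ IsStoppingSet H M ∧
      (∀ T ⊆ E, IsStoppingSet H T → T ⊆ M) ∧
      (∀ R : Finset (Fin n), Relation.ReflTransGen (PeelStep H) E R →
        (∀ R', ¬ PeelStep H R R') → R = M) := by
  classical
  set M : Finset (Fin n) :=
    Finset.univ.filter (fun j => ∃ T, T ⊆ E ∧ IsStoppingSet H T ∧ j ∈ T) with hM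
  have hmemM : ∀ j, j ∈ M ↔ ∃ T, T ⊆ E ∧ IsStoppingSet H T ∧ j ∈ T := by
    intro j; simp [hM]
  have hME : M ⊆ E := by
    intro j hj
    obtain ⟨T, hTE, _, hjT⟩ := (hmemM j).1 hj
    exact hTE hjT
  have hmax : ∀ T ⊆ E, IsStoppingSet H T → T ⊆ M := by
    intro T hTE hTS j hj
    exact (hmemM j).2 ⟨T, hTE, hTS, hj⟩
  have hMS : IsStoppingSet H M := by
    intro i hcard
    obtain ⟨j, hjeq⟩ := Finset.card_eq_one.1 hcard
    have hjM : j ∈ M := by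
      have : j ∈ M.filter (fun k => H i k = 1) := by rw [hjeq]; simp
      exact (Finset.mem_filter.1 this).1
    obtain ⟨T, hTE, hTS, hjT⟩ := (hmemM j).1 hjM
    have hTM : T ⊆ M := hmax T hTE hTS
    have hsub : T.filter (fun k => H i k = 1) ⊆ {j} := by
      rw [← hjeq]; exact Finset.filter_subset_filter _ hTM
    have hjmem : j ∈ T.filter (fun k => H i k = 1) := by
      have : j ∈ M.filter (fun k => H i k = 1) := by rw [hjeq]; simp
      exact Finset.mem_filter.2 ⟨hjT, (Finset.mem_filter.1 this).2⟩
    have : T.filter (fun k => H i k = 1) = {j} :=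
      Finset.Subset.antisymm hsub (Finset.singleton_subset_iff.2 hjmem)
    exact hTS i (by rw [this]; simp)
  refine ⟨M, hME, hMS, hmax, ?_⟩
  intro R hR hstuck
  -- invariant: M ⊆ R ∧ R ⊆ E
  have hinv : M ⊆ R ∧ R ⊆ E := by
    clear hstuck
    induction hR with
    | refl => exact ⟨hME, Finset.Subset.refl _⟩
    | tail hab hstep ih =>
      obtain ⟨hMa, haE⟩ := ih
      obtain ⟨j, ⟨hjS, i, hij, hcard⟩, rfl⟩ := hstep
      constructor
      · intro k hk
        refine Finset.mem_erase.2 ⟨?_, hMa hk⟩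
        rintro rfl
        -- k ∈ M dangling: M.filter ⊆ R.filter which has card 1 and contains k
        obtain ⟨l, hleq⟩ := Finset.card_eq_one.1 hcard
        have hksub : M.filter (fun m => H i m = 1) ⊆ {l} := by
          rw [← hleq]; exact Finset.filter_subset_filter _ hMa
        have hkm : k ∈ M.filter (fun m => H i m = 1) := Finset.mem_filter.2 ⟨hk, hij⟩
        have : M.filter (fun m => H i m = 1) = {l} :=
          Finset.Subset.antisymm hksub (by
            have : k = l := Finset.mem_singleton.1 (hksub hkm)
            subst this; exact Finset.singleton_subset_iff.2 hkm)
        exact hMS i (by rw [this]; simp)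
      · exact (Finset.erase_subset _ _).trans haE
  -- R is a stopping set since stuck
  have hRS : IsStoppingSet H R := by
    intro i hcard
    obtain ⟨j, hjeq⟩ := Finset.card_eq_one.1 hcard
    have hjR : j ∈ R ∧ H i j = 1 := by
      have : j ∈ R.filter (fun k => H i k = 1) := by rw [hjeq]; simp
      exact Finset.mem_filter.1 this
    exact hstuck (R.erase j) ⟨j, ⟨hjR.1, i, hjR.2, hcard⟩, rfl⟩
  exact Finset.Subset.antisymm (hmax R hinv.2 hRS) hinv.1
end

section
/- Vertical stopping sets: if S_B is a stopping set for the Tanner graph T(H), then for every b ∈ B (check-node index of T(H)), the set {b} × S_B of qubits of HGP(H) in the B×B block is a stopping set for the Tanner graph T(H_Z) of the hypergraph product code. -/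
/-- Qubits of `HGP(H)`: pairs in `A × A` (bit-bit) or `B × B` (check-check),
with `|A| = n`, `|B| = r`. -/
abbrev QubitIdx (n r : ℕ) := (Fin n × Fin n) ⊕ (Fin r × Fin r)

/-- Z-type parity-check matrix of the hypergraph product code `HGP(H)`: the Z generator
indexed by `(b, a') ∈ B × A` acts on qubits `(a, a')` with `H b a = 1` and on qubits
`(b, b')` with `H b' a' = 1`. -/
def hgpHZ {r n : ℕ} (H : Matrix (Fin r) (Fin n) (ZMod 2)) :
    Matrix (Fin r × Fin n) (QubitIdx n r) (ZMod 2) :=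
  fun c q =>
    match q with
    | Sum.inl (a, a'') => if a'' = c.2 then H c.1 a else 0
    | Sum.inr (b'', b') => if b'' = c.1 then H b' c.2 else 0

/-- **vertical stopping sets.** If `S_B ⊆ B` is a stopping set for the
Tanner graph `T(H)` (with the `B`-side as variable nodes, adjacency `H b' a'`), then
for every `b ∈ B` the set `{b} × S_B` of qubits of `HGP(H)` is a stopping set for the
Tanner graph `T(H_Z)`. -/
theorem vertical_stopping_sets
    {r n : ℕ} (H : Matrix (Fin r) (Fin n) (ZMod 2)) (SB : Finset (Fin r))
    (hSB : ∀ a' : Fin n, (SB.filter (fun b' => H b' a' = 1)).card ≠ 1)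
    (b : Fin r) :
    ∀ c : Fin r × Fin n,
      (((SB.image (fun b' => (Sum.inr (b, b') : QubitIdx n r)))).filter
          (fun q => hgpHZ H c q = 1)).card ≠ 1 := by
  intro c
  have hinj : Function.Injective (fun b' : Fin r => (Sum.inr (b, b') : QubitIdx n r)) := by
    intro x y h
    simpa using h
  rw [Finset.filter_image]
  rw [Finset.card_image_of_injective _ hinj]
  by_cases hb : b = c.1
  · have heq : (SB.filter (fun b' : Fin r => hgpHZ H c (Sum.inr (b, b')) = 1)) =
        (SB.filter (fun b' => H b' c.2 = 1)) := by
      apply Finset.filter_congr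
      intro x _
      simp [hgpHZ, hb]
    rw [heq]
    exact hSB c.2
  · have : (SB.filter (fun b' : Fin r => hgpHZ H c (Sum.inr (b, b')) = 1)) = ∅ := by
      apply Finset.filter_false_of_mem
      intro x _
      simp [hgpHZ, hb]
    rw [this]
    simp
end

section
/- Horizontal stopping sets: if S_A is a stopping set for the Tanner graph T(H^T), then for every a' ∈ A, the set S_A × {a'} of qubits of HGP(H) is a stopping set for the Tanner graph T(H_Z). -/
/-- **horizontal stopping sets.** If `S_A ⊆ A` is a stopping set for the
Tanner graph `T(Hᵀ)` (with the `A`-side as variable nodes, adjacency `H b a`), then for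
every `a' ∈ A` the set `S_A × {a'}` of qubits of `HGP(H)` is a stopping set for the
Tanner graph `T(H_Z)`. -/
theorem horizontal_stopping_sets
    {r n : ℕ} (H : Matrix (Fin r) (Fin n) (ZMod 2)) (SA : Finset (Fin n))
    (hSA : ∀ b : Fin r, (SA.filter (fun a => H b a = 1)).card ≠ 1)
    (a' : Fin n) :
    ∀ c : Fin r × Fin n,
      (((SA.image (fun a => (Sum.inl (a, a') : QubitIdx n r)))).filter
          (fun q => hgpHZ H c q = 1)).card ≠ 1 := by
  intro c
  by_cases h : a' = c.2
  · have key : ((SA.image (fun a => (Sum.inl (a, a') : QubitIdx n r))).filter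
        (fun q => hgpHZ H c q = 1)) =
      (SA.filter (fun a => H c.1 a = 1)).image
        (fun a => (Sum.inl (a, a') : QubitIdx n r)) := by
      ext q
      simp only [Finset.mem_filter, Finset.mem_image]
      simp only [hgpHZ]
      constructor
      · rintro ⟨⟨a, ha, rfl⟩, hq⟩
        simp only [h, if_pos rfl] at hq
        exact ⟨a, ⟨ha, hq⟩, rfl⟩
      · rintro ⟨a, ⟨ha, hHa⟩, rfl⟩
        exact ⟨⟨a, ha, rfl⟩, by simp [h, hHa]⟩
    rw [key, Finset.card_image_of_injective _ (fun x y hxy => by simpa using hxy)]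
    exact hSA c.1
  · have key : ((SA.image (fun a => (Sum.inl (a, a') : QubitIdx n r))).filter
        (fun q => hgpHZ H c q = 1)) = ∅ := by
      apply Finset.filter_false_of_mem
      rintro q hq
      simp only [Finset.mem_image] at hq
      obtain ⟨a, -, rfl⟩ := hq
      simp [hgpHZ, h]
    simp [key]
end
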